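/- Let −1 ≤ a < b < 1 with a + b < 0, let d ≥ 1, n > d, and let v_1, …, v_n be unit vectors in ℝ^d such that ⟨v_i, v_j⟩ ∈ {a, b} for all i ≠ j. Then there exist unit vectors w_1, …, w_n in ℝ^{d+1} such that |⟨w_i, w_j⟩| = (b − a)/(2 − a − b) for all i ≠ j; i.e., there exists an equiangular line system of n lines in ℝ^{d+1} with common angle (b − a)/(2 − a − b). In particular, n is at most the maximum number of equiangular lines in ℝ^{d+1}. -/

import Mathlib

/-- an `n`-point spherical two-distance set in `S^{d-1}` with
`a + b < 0` yields an equiangular line system of `n` lines in `ℝ^{d+1}` with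
common angle `(b − a)/(2 − a − b)`. -/
theorem stmt15 (d n : ℕ) (hd : 1 ≤ d) (hn : d < n)
    (a b : ℝ) (ha : -1 ≤ a) (hab : a < b) (hb : b < 1) (hsum : a + b < 0)
    (v : Fin n → EuclideanSpace ℝ (Fin d))
    (hunit : ∀ i, ‖v i‖ = 1)
    (hinner : ∀ i j, i ≠ j →
      (inner ℝ (v i) (v j) : ℝ) = a ∨ (inner ℝ (v i) (v j) : ℝ) = b) :
    ∃ w : Fin n → EuclideanSpace ℝ (Fin (d + 1)),
      (∀ i, ‖w i‖ = 1) ∧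
      (∀ i j, i ≠ j → |(inner ℝ (w i) (w j) : ℝ)| = (b - a) / (2 - a - b)) := by
  set t2 : ℝ := -(a + b) / 2 with ht2def
  have ht2 : 0 ≤ t2 := by unfold t2; linarith
  have hden : (0:ℝ) < 2 - a - b := by linarith
  set c2 : ℝ := 1 + t2 with hc2def
  have hc2pos : 0 < c2 := by unfold c2; linarith
  set t : ℝ := Real.sqrt t2 with htdef
  have htsq : t ^ 2 = t2 := Real.sq_sqrt ht2
  set c : ℝ := Real.sqrt c2 with hcdef
  have hcsq : c ^ 2 = c2 := Real.sq_sqrt hc2pos.le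
  have hcpos : 0 < c := Real.sqrt_pos.mpr hc2pos
  -- the lifted vectors
  set w : Fin n → EuclideanSpace ℝ (Fin (d+1)) :=
    fun i => WithLp.toLp 2 (Fin.snoc (fun m : Fin d => v i m / c) (t / c) : Fin (d+1) → ℝ)
    with hwdef
  have hwapp : ∀ i k, w i k = (Fin.snoc (fun m : Fin d => v i m / c) (t / c) : Fin (d+1) → ℝ) k :=
    fun i k => rfl
  refine ⟨w, ?_, ?_⟩
  · intro i
    have hv : ∑ m : Fin d, v i m ^ 2 = 1 := by
      have := hunit i
      rw [EuclideanSpace.norm_eq] at this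
      have h := congrArg (· ^ 2) this
      simpa [Real.sq_sqrt (Finset.sum_nonneg fun m _ => sq_nonneg (v i m))]
        using h
    rw [EuclideanSpace.norm_eq]
    have : ∑ k : Fin (d+1), (w i k) ^ 2 = 1 := by
      simp only [hwapp]
      rw [Fin.sum_univ_castSucc]
      simp only [Fin.snoc_castSucc, Fin.snoc_last]
      have : ∑ m : Fin d, (v i m / c) ^ 2 = (∑ m : Fin d, v i m ^ 2) / c ^ 2 := by
        rw [Finset.sum_div]; congr 1; ext m; ring
      rw [this, hv, div_pow, hcsq]
      field_simp
      unfold c2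
      linarith [htsq]
    simp only [Real.norm_eq_abs, sq_abs]
    rw [this, Real.sqrt_one]
  · intro i j hij
    have hip : (inner ℝ (w i) (w j) : ℝ)
        = ((inner ℝ (v i) (v j) : ℝ) + t2) / c2 := by
      rw [PiLp.inner_apply]
      simp only [RCLike.inner_apply, conj_trivial, hwapp]
      rw [Fin.sum_univ_castSucc]
      simp only [Fin.snoc_castSucc, Fin.snoc_last]
      have hvinner : (inner ℝ (v i) (v j) : ℝ) = ∑ m : Fin d, v i m * v j m := by
        rw [PiLp.inner_apply]; simp; exact Finset.sum_congr rfl fun m _ => mul_comm _ _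
      rw [hvinner]
      have h1 : ∑ m : Fin d, v i m / c * (v j m / c)
          = (∑ m : Fin d, v i m * v j m) / c2 := by
        rw [Finset.sum_div]; congr 1; ext m
        rw [← hcsq]; ring
      rw [show ∑ x : Fin d, v j x / c * (v i x / c) = ∑ m : Fin d, v i m / c * (v j m / c) from
        Finset.sum_congr rfl fun m _ => mul_comm _ _]
      rw [h1, ← hcsq, ← htsq]
      field_simp
    rw [hip]
    have hc2eq : c2 = (2 - a - b) / 2 := by unfold c2 t2; ring
    rcases hinner i j hij with h | h
    · rw [h, hc2eq]
      have : (a + t2) / ((2 - a - b) / 2) = (a - b) / (2 - a - b) := by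
        unfold t2
        field_simp
        ring
      rw [this, abs_div, abs_of_pos hden, abs_of_neg (by linarith : a - b < 0)]
      ring_nf
    · rw [h, hc2eq]
      have : (b + t2) / ((2 - a - b) / 2) = (b - a) / (2 - a - b) := by
        unfold t2
        field_simp
        ring
      rw [this]
      exact abs_of_nonneg (div_nonneg (by linarith) hden.le)
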